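/- Let p be a prime with p ≡ 1 (mod 3), and let x, y be integers with p^t = x^2 + 27y^2 for some t ≥ 1 and gcd(x, p) = 1. Define sequences by x_0 = x, y_0 = y, x_{ℓ} = x_0·x_{ℓ-1} − 27·y_0·y_{ℓ-1}, y_{ℓ} = x_0·y_{ℓ-1} + y_0·x_{ℓ-1}. Then gcd(x_ℓ, p) = 1 for all ℓ ≥ 0. -/

import Mathlib

theorem stmt_1 (p : ℕ) (hp : p.Prime) (hp3 : p % 3 = 1)
    (t : ℕ) (ht : 1 ≤ t) (x y : ℤ)
    (hxy : (p : ℤ) ^ t = x ^ 2 + 27 * y ^ 2) (hcop : Int.gcd x (p : ℤ) = 1)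
    (X Y : ℕ → ℤ) (hX0 : X 0 = x) (hY0 : Y 0 = y)
    (hXr : ∀ ℓ, X (ℓ + 1) = x * X ℓ - 27 * y * Y ℓ)
    (hYr : ∀ ℓ, Y (ℓ + 1) = x * Y ℓ + y * X ℓ) :
    ∀ ℓ, Int.gcd (X ℓ) (p : ℤ) = 1 := by
  haveI : Fact p.Prime := ⟨hp⟩
  set a : ZMod p := (x : ZMod p) with ha
  set b : ZMod p := (y : ZMod p) with hb
  have hand : ¬ ((p : ℤ) ∣ x) := by
    intro h
    have : (p : ℤ) ∣ Int.gcd x (p : ℤ) := Int.dvd_coe_gcd h dvd_rfl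
    rw [hcop] at this
    have hp2 : 2 ≤ p := hp.two_le
    have := Int.le_of_dvd one_pos this
    omega
  have haz : a ≠ 0 := by
    rw [ha, Ne, ZMod.intCast_zmod_eq_zero_iff_dvd]
    exact hand
  have h2 : (2 : ZMod p) ≠ 0 := by
    have : ((2 : ℕ) : ZMod p) ≠ 0 := by
      rw [Ne, ZMod.natCast_eq_zero_iff]
      intro h
      have := (Nat.prime_dvd_prime_iff_eq hp Nat.prime_two).mp h
      omega
    simpa using this
  have hsq : a ^ 2 + 27 * b ^ 2 = 0 := by
    have := congrArg (fun z : ℤ => (z : ZMod p)) hxy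
    push_cast at this
    rw [ZMod.natCast_self] at this
    rw [zero_pow (by omega : t ≠ 0)] at this
    exact this.symm
  have key : ∀ ℓ, (X ℓ : ZMod p) = (2 * a) ^ ℓ * a ∧ (Y ℓ : ZMod p) = (2 * a) ^ ℓ * b := by
    intro ℓ
    induction ℓ with
    | zero => simp [hX0, hY0, ha, hb]
    | succ n ih =>
      obtain ⟨ihX, ihY⟩ := ih
      constructor
      · rw [hXr n]
        push_cast
        rw [ihX, ihY, ← ha, ← hb]
        linear_combination (-(2 * a) ^ n) * hsq
      · rw [hYr n]
        push_cast
        rw [ihX, ihY, ← ha, ← hb]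
        ring
  intro ℓ
  have hXz : (X ℓ : ZMod p) ≠ 0 := by
    rw [(key ℓ).1]
    exact mul_ne_zero (pow_ne_zero _ (mul_ne_zero h2 haz)) haz
  have hnd : ¬ ((p : ℤ) ∣ X ℓ) := by
    intro h
    exact hXz ((ZMod.intCast_zmod_eq_zero_iff_dvd _ _).mpr h)
  have hgd : (Int.gcd (X ℓ) (p : ℤ) : ℤ) ∣ (p : ℤ) := Int.gcd_dvd_right _ _
  have hdiv : Int.gcd (X ℓ) (p : ℤ) ∣ p := by exact_mod_cast hgd
  rcases (Nat.Prime.eq_one_or_self_of_dvd hp _ hdiv) with h | h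
  · exact h
  · exfalso
    apply hnd
    have : (Int.gcd (X ℓ) (p : ℤ) : ℤ) ∣ X ℓ := Int.gcd_dvd_left _ _
    rwa [h] at this
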